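/- For n ≥ 3, let K ⊆ ℝⁿ be the compact double cone K = {x ∈ ℝⁿ : ‖(x_1,…,x_{n−1})‖ + |x_n| ≤ 1} (the convex hull of the points (0,…,0,±1) and the set {(ξ_1,…,ξ_{n−1},0) : ξ_1² + ⋯ + ξ_{n−1}² = 1}). Then its circumball is B(o,1), K ⊆ ⋃_{x ∈ K ∩ S^{n−1}} (K − x), yet for every finite set {x_1,…,x_k} ⊆ K ∩ S^{n−1} and every δ > 0, B°(o,δ) is not contained in ⋃_{i=1}^k (K − x_i). -/

import Mathlib

open Metric Set
open scoped RealInnerProductSpace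

/-- The quantified t-illumination number `i(K,ε)`: the least `m` for which there exist
unit vectors `r_1, …, r_m` such that every `x ∈ K` satisfies `x + ε • r_i ∈ K` for some `i`;
`∞` if no finite such family exists. -/
noncomputable def iq {n : ℕ} (K : Set (EuclideanSpace ℝ (Fin n))) (ε : ℝ) : ℕ∞ :=
  sInf {m : ℕ∞ | ∃ s : Finset (EuclideanSpace ℝ (Fin n)), (s.card : ℕ∞) = m ∧
    (∀ r ∈ s, ‖r‖ = 1) ∧ ∀ x ∈ K, ∃ r ∈ s, x + ε • r ∈ K}

/-- The quantified illumination number `c(K,ε)`: the least `m` for which there exist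
unit vectors `r_1, …, r_m` such that every `x ∈ K` satisfies `x + ε • r_i ∈ int K` for some `i`;
`∞` if no finite such family exists. -/
noncomputable def cq {n : ℕ} (K : Set (EuclideanSpace ℝ (Fin n))) (ε : ℝ) : ℕ∞ :=
  sInf {m : ℕ∞ | ∃ s : Finset (EuclideanSpace ℝ (Fin n)), (s.card : ℕ∞) = m ∧
    (∀ r ∈ s, ‖r‖ = 1) ∧ ∀ x ∈ K, ∃ r ∈ s, x + ε • r ∈ interior K}

/-- `B(c, R)` is the circumball of `K`: a closed ball containing `K` of minimal radius. -/
def IsCircumball {n : ℕ} (K : Set (EuclideanSpace ℝ (Fin n)))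
    (c : EuclideanSpace ℝ (Fin n)) (R : ℝ) : Prop :=
  K ⊆ closedBall c R ∧ ∀ (c' : EuclideanSpace ℝ (Fin n)) (R' : ℝ), K ⊆ closedBall c' R' → R ≤ R'

namespace DoubleConeAux

variable {m : ℕ}

lemma sum_nonneg' (x : EuclideanSpace ℝ (Fin (m+1))) :
    (0:ℝ) ≤ ∑ i : Fin m, x i.castSucc ^ 2 :=
  Finset.sum_nonneg fun _ _ => sq_nonneg _

lemma sq_sqrt' (x : EuclideanSpace ℝ (Fin (m+1))) :
    Real.sqrt (∑ i : Fin m, x i.castSucc ^ 2) ^ 2 = ∑ i : Fin m, x i.castSucc ^ 2 :=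
  Real.sq_sqrt (sum_nonneg' x)

lemma norm_eq' (x : EuclideanSpace ℝ (Fin (m+1))) :
    ‖x‖ = Real.sqrt ((∑ i : Fin m, x i.castSucc ^ 2) + x (Fin.last m) ^ 2) := by
  rw [EuclideanSpace.norm_eq, Fin.sum_univ_castSucc]
  simp [Real.norm_eq_abs, sq_abs]

end DoubleConeAux

set_option maxHeartbeats 1000000 in
open DoubleConeAux in
/-- Remark 3.2 (B): for `n = m + 1 ≥ 3`, the compact double cone
`K = {x ∈ ℝⁿ : ‖(x_1,…,x_{n-1})‖ + |x_n| ≤ 1}` has circumball `B(o,1)` and is covered by the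
translates `K - x`, `x ∈ K ∩ S^{n-1}`, yet no finitely many such translates cover a
neighborhood of the origin. -/
theorem double_cone_cover_but_no_finite_cover {m : ℕ} (hm : 2 ≤ m)
    (K : Set (EuclideanSpace ℝ (Fin (m + 1))))
    (hK : K = {x : EuclideanSpace ℝ (Fin (m + 1)) |
      Real.sqrt (∑ i : Fin m, x i.castSucc ^ 2) + |x (Fin.last m)| ≤ 1}) :
    IsCircumball K 0 1 ∧
    K ⊆ (⋃ x ∈ K ∩ sphere (0 : EuclideanSpace ℝ (Fin (m + 1))) 1, (· - x) '' K) ∧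
    ∀ (k : ℕ) (x : Fin k → EuclideanSpace ℝ (Fin (m + 1))),
      (∀ i, x i ∈ K ∩ sphere (0 : EuclideanSpace ℝ (Fin (m + 1))) 1) →
      ∀ δ : ℝ, 0 < δ →
        ¬ (ball (0 : EuclideanSpace ℝ (Fin (m + 1))) δ ⊆ ⋃ i, (· - x i) '' K) := by
  subst hK
  set K : Set (EuclideanSpace ℝ (Fin (m + 1))) := {x | Real.sqrt (∑ i : Fin m, x i.castSucc ^ 2) + |x (Fin.last m)| ≤ 1} with hKdef
  have memK : ∀ x : EuclideanSpace ℝ (Fin (m+1)),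
      x ∈ K ↔ Real.sqrt (∑ i : Fin m, x i.castSucc ^ 2) + |x (Fin.last m)| ≤ 1 :=
    fun x => Iff.rfl
  refine ⟨⟨?_, ?_⟩, ?_, ?_⟩
  · -- K ⊆ closedBall 0 1
    intro x hx
    rw [memK] at hx
    rw [mem_closedBall, dist_zero_right, norm_eq']
    rw [show (1:ℝ) = Real.sqrt 1 by simp]
    apply Real.sqrt_le_sqrt
    nlinarith [sq_sqrt' x, Real.sqrt_nonneg (∑ i : Fin m, x i.castSucc ^ 2),
      abs_nonneg (x (Fin.last m)), sq_abs (x (Fin.last m))]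
  · -- minimality
    intro c' R' hsub
    set i0 : Fin m := ⟨0, by omega⟩ with hi0
    have h01 : (i0.castSucc : Fin (m+1)) ≠ Fin.last m := (Fin.castSucc_lt_last _).ne
    set e : EuclideanSpace ℝ (Fin (m+1)) := EuclideanSpace.single (i0.castSucc) (1:ℝ) with he
    have hsum : ∑ i : Fin m, e i.castSucc ^ 2 = 1 := by
      have h1 : ∀ i : Fin m, e i.castSucc ^ 2 = if i = i0 then 1 else 0 := by
        intro i
        rw [he, EuclideanSpace.single_apply]
        by_cases h : i = i0
        · simp [h]
        · rw [if_neg (by simpa [Fin.castSucc_inj] using h), if_neg h]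
          norm_num
      rw [Finset.sum_congr rfl fun i _ => h1 i, Finset.sum_ite_eq' Finset.univ i0 fun _ => (1:ℝ)]
      simp
    have hlast : e (Fin.last m) = 0 := by
      simp [he, EuclideanSpace.single_apply, h01.symm]
    have heK : e ∈ K := by rw [memK, hsum, hlast]; simp
    have hneK : -e ∈ K := by
      rw [memK]
      have : ∀ i : Fin m, (-e) i.castSucc ^ 2 = e i.castSucc ^ 2 := by intro i; simp
      rw [Finset.sum_congr rfl fun i _ => this i, hsum]
      simp [hlast]
    have hde : dist e (-e) = 2 := by
      rw [dist_eq_norm, sub_neg_eq_add, ← two_smul ℝ e, norm_smul, he,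
        EuclideanSpace.norm_single]
      norm_num
    have h1 := hsub heK
    have h2 := hsub hneK
    rw [mem_closedBall] at h1 h2
    have := dist_triangle e c' (-e)
    rw [hde] at this
    rw [dist_comm] at h2
    linarith
  · -- covering
    intro y hy
    rw [memK] at hy
    have hcov : ∀ x : EuclideanSpace ℝ (Fin (m+1)), x ∈ K → ‖x‖ = 1 → y + x ∈ K →
        y ∈ ⋃ x ∈ K ∩ sphere (0 : EuclideanSpace ℝ (Fin (m + 1))) 1, (· - x) '' K := by
      intro x hx1 hx2 hx3
      exact mem_biUnion ⟨hx1, mem_sphere_zero_iff_norm.mpr hx2⟩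
        ⟨y + x, hx3, add_sub_cancel_right y x⟩
    set s := Real.sqrt (∑ i : Fin m, y i.castSucc ^ 2) with hs
    have hs0 : 0 ≤ s := Real.sqrt_nonneg _
    have ht0 : 0 ≤ |y (Fin.last m)| := abs_nonneg _
    rcases le_or_gt s |y (Fin.last m)| with hcase | hcase
    · -- apex
      rcases le_or_gt 0 (y (Fin.last m)) with hsign | hsign
      · -- x = -e_last
        set x : EuclideanSpace ℝ (Fin (m+1)) := -(EuclideanSpace.single (Fin.last m) (1:ℝ)) with hx
        have hxc : ∀ i : Fin m, x i.castSucc = 0 := by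
          intro i
          simp [hx, EuclideanSpace.single_apply, (Fin.castSucc_lt_last i).ne]
        have hxl : x (Fin.last m) = -1 := by simp [hx, EuclideanSpace.single_apply]
        have hsumx : ∑ i : Fin m, x i.castSucc ^ 2 = 0 := by
          apply Finset.sum_eq_zero; intro i _; rw [hxc i]; ring
        refine hcov x ?_ ?_ ?_
        · rw [memK, hsumx, hxl]; simp
        · rw [hx, norm_neg, EuclideanSpace.norm_single]; simp
        · rw [memK]
          have h1 : ∑ i : Fin m, (y + x) i.castSucc ^ 2 = ∑ i : Fin m, y i.castSucc ^ 2 := by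
            apply Finset.sum_congr rfl; intro i _
            have : (y + x) i.castSucc = y i.castSucc := by simp [hxc i]
            rw [this]
          have h2 : (y + x) (Fin.last m) = y (Fin.last m) - 1 := by simp [hxl]; ring
          rw [h1, h2, ← hs]
          have hyl1 : y (Fin.last m) ≤ 1 := le_trans (le_abs_self _) (by linarith)
          rw [abs_of_nonpos (by linarith : y (Fin.last m) - 1 ≤ 0)]
          rw [abs_of_nonneg hsign] at hcase
          linarith
      · -- x = e_last
        set x : EuclideanSpace ℝ (Fin (m+1)) := EuclideanSpace.single (Fin.last m) (1:ℝ) with hx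
        have hxc : ∀ i : Fin m, x i.castSucc = 0 := by
          intro i
          simp [hx, EuclideanSpace.single_apply, (Fin.castSucc_lt_last i).ne]
        have hxl : x (Fin.last m) = 1 := by simp [hx, EuclideanSpace.single_apply]
        have hsumx : ∑ i : Fin m, x i.castSucc ^ 2 = 0 := by
          apply Finset.sum_eq_zero; intro i _; rw [hxc i]; ring
        refine hcov x ?_ ?_ ?_
        · rw [memK, hsumx, hxl]; simp
        · rw [hx, EuclideanSpace.norm_single]; simp
        · rw [memK]
          have h1 : ∑ i : Fin m, (y + x) i.castSucc ^ 2 = ∑ i : Fin m, y i.castSucc ^ 2 := by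
            apply Finset.sum_congr rfl; intro i _
            have : (y + x) i.castSucc = y i.castSucc := by simp [hxc i]
            rw [this]
          have h2 : (y + x) (Fin.last m) = y (Fin.last m) + 1 := by simp [hxl]
          rw [h1, h2, ← hs]
          have habs : |y (Fin.last m)| = -y (Fin.last m) := abs_of_neg hsign
          have hyl1 : -1 ≤ y (Fin.last m) := by nlinarith [hy, habs]
          rw [abs_of_nonneg (by linarith : 0 ≤ y (Fin.last m) + 1)]
          rw [habs] at hcase
          linarith
    · -- equator
      have hspos : 0 < s := lt_of_le_of_lt ht0 hcase
      set x : EuclideanSpace ℝ (Fin (m+1)) :=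
        (-s⁻¹) • (WithLp.toLp 2 (fun j => if j = Fin.last m then (0:ℝ) else y j) : EuclideanSpace ℝ (Fin (m+1))) with hx
      have hxc : ∀ i : Fin m, x i.castSucc = -s⁻¹ * y i.castSucc := by
        intro i
        simp [hx, (Fin.castSucc_lt_last i).ne]
      have hxl : x (Fin.last m) = 0 := by simp [hx]
      have hsumy : ∑ i : Fin m, y i.castSucc ^ 2 = s ^ 2 := (sq_sqrt' y).symm
      have hsumx : ∑ i : Fin m, x i.castSucc ^ 2 = 1 := by
        have : ∀ i : Fin m, x i.castSucc ^ 2 = s⁻¹ ^ 2 * y i.castSucc ^ 2 := by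
          intro i; rw [hxc i]; ring
        rw [Finset.sum_congr rfl fun i _ => this i, ← Finset.mul_sum, hsumy]
        field_simp
      refine hcov x ?_ ?_ ?_
      · rw [memK, hsumx, hxl]; simp
      · rw [norm_eq', hsumx, hxl]; simp
      · rw [memK]
        have h1 : ∑ i : Fin m, (y + x) i.castSucc ^ 2 = (s - 1) ^ 2 := by
          have : ∀ i : Fin m, (y + x) i.castSucc ^ 2 = (1 - s⁻¹)^2 * y i.castSucc ^ 2 := by
            intro i
            have : (y + x) i.castSucc = (1 - s⁻¹) * y i.castSucc := by
              simp [hxc i]; ring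
            rw [this]; ring
          rw [Finset.sum_congr rfl fun i _ => this i, ← Finset.mul_sum, hsumy]
          field_simp
          try ring
        have h2 : (y + x) (Fin.last m) = y (Fin.last m) := by simp [hxl]
        rw [h1, h2]
        have hsle1 : s ≤ 1 := by linarith [hy, ht0]
        rw [Real.sqrt_sq_eq_abs, abs_of_nonpos (by linarith : s - 1 ≤ 0)]
        linarith
  · -- no finite subcover
    intro k x hx δ hδ hcontra
    have hxK : ∀ i, x i ∈ K := fun i => (hx i).1
    have hxS : ∀ i, ‖x i‖ = 1 := fun i => mem_sphere_zero_iff_norm.mp (hx i).2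
    -- choose v : unit vector in equator plane avoiding -x i
    set i0 : Fin m := ⟨0, by omega⟩ with hi0
    set i1 : Fin m := ⟨1, by omega⟩ with hi1
    have h01m : i0 ≠ i1 := by
      intro h
      have := congrArg Fin.val h
      simp [hi0, hi1] at this
    obtain ⟨v, hv1, hvlast, hvne⟩ : ∃ v : EuclideanSpace ℝ (Fin (m+1)),
        ‖v‖ = 1 ∧ v (Fin.last m) = 0 ∧ ∀ i, v ≠ -x i := by
      set a : EuclideanSpace ℝ (Fin (m+1)) := EuclideanSpace.single (i0.castSucc) (1:ℝ) with ha
      set b : EuclideanSpace ℝ (Fin (m+1)) := EuclideanSpace.single (i1.castSucc) (1:ℝ) with hb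
      have hab : (i0.castSucc : Fin (m+1)) ≠ i1.castSucc := by
        simpa [Fin.castSucc_inj] using h01m
      set w : ℕ → EuclideanSpace ℝ (Fin (m+1)) :=
        fun j => (Real.sqrt (1 + (j:ℝ)^2))⁻¹ • (a + (j:ℝ) • b) with hw
      have hc : ∀ j : ℕ, (0:ℝ) < Real.sqrt (1 + (j:ℝ)^2) := by
        intro j; apply Real.sqrt_pos.mpr; positivity
      have hwa : ∀ j : ℕ, w j (i0.castSucc) = (Real.sqrt (1 + (j:ℝ)^2))⁻¹ := by
        intro j
        simp [hw, ha, hb, EuclideanSpace.single_apply, hab.symm, h01m]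
      have hwlast : ∀ j : ℕ, w j (Fin.last m) = 0 := by
        intro j
        have h0 : (i0.castSucc : Fin (m+1)) ≠ Fin.last m := (Fin.castSucc_lt_last _).ne
        have h1 : (i1.castSucc : Fin (m+1)) ≠ Fin.last m := (Fin.castSucc_lt_last _).ne
        simp [hw, ha, hb, EuclideanSpace.single_apply, h0.symm, h1.symm]
      have hwnorm : ∀ j : ℕ, ‖w j‖ = 1 := by
        intro j
        have hip : ⟪a, b⟫ = 0 := by
          rw [ha, EuclideanSpace.inner_single_left]
          simp [hb, EuclideanSpace.single_apply, hab]
        have hnab : ‖a + (j:ℝ) • b‖ ^ 2 = 1 + (j:ℝ)^2 := by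
          rw [norm_add_sq_real, inner_smul_right, hip, norm_smul, ha, hb,
            EuclideanSpace.norm_single]
          simp [mul_pow, sq_abs]
        have : ‖a + (j:ℝ) • b‖ = Real.sqrt (1 + (j:ℝ)^2) := by
          rw [← hnab, Real.sqrt_sq (norm_nonneg _)]
        rw [hw]
        simp only [norm_smul, this, norm_inv, Real.norm_eq_abs,
          abs_of_pos (hc j)]
        field_simp
      have hwinj : Function.Injective w := by
        intro j j' h
        have := congrArg (fun z : EuclideanSpace ℝ (Fin (m+1)) => z (i0.castSucc)) h
        simp only [hwa] at this
        have h2 : Real.sqrt (1 + (j:ℝ)^2) = Real.sqrt (1 + (j':ℝ)^2) := by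
          have := inv_injective this; exact this
        have h3 : 1 + (j:ℝ)^2 = 1 + (j':ℝ)^2 := by
          have := congrArg (fun t => t^2) h2
          simpa [Real.sq_sqrt (by positivity : (0:ℝ) ≤ 1 + (j:ℝ)^2),
            Real.sq_sqrt (by positivity : (0:ℝ) ≤ 1 + (j':ℝ)^2)] using this
        have : (j:ℝ) = (j':ℝ) := by nlinarith [Nat.cast_nonneg (α := ℝ) j, Nat.cast_nonneg (α := ℝ) j']
        exact_mod_cast this
      by_contra hcon
      push_neg at hcon
      have hall : ∀ j : Fin (k+1), ∃ i : Fin k, w (j:ℕ) = -x i := by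
        intro j
        obtain ⟨i, hi⟩ := hcon (w (j:ℕ)) (hwnorm _) (hwlast _)
        exact ⟨i, hi⟩
      choose g hg using hall
      obtain ⟨j, j', hjj', hgj⟩ := Fintype.exists_ne_map_eq_of_card_lt g (by simp)
      apply hjj'
      have : w (j:ℕ) = w (j':ℕ) := by rw [hg j, hg j', hgj]
      exact Fin.val_injective (hwinj this)
    -- uniform inner product bound
    set F : Fin k → ℝ := fun i => -⟪v, x i⟫ with hF
    have hFlt : ∀ i, F i < 1 := by
      intro i
      rcases lt_or_ge (F i) 1 with h | h
      · exact h
      · exfalso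
        have h1 : ⟪v, -x i⟫ ≤ ‖v‖ * ‖-x i‖ := real_inner_le_norm _ _
        rw [hv1, norm_neg, hxS i, one_mul, inner_neg_right] at h1
        have h' : (1:ℝ) ≤ -⟪v, x i⟫ := h
        have h2 : ⟪v, -x i⟫ = 1 := by rw [inner_neg_right]; linarith
        have h3 : v = -x i := by
          have hn : ‖-x i‖ = 1 := by rw [norm_neg, hxS i]
          exact (inner_eq_one_iff_of_norm_eq_one (𝕜 := ℝ) hv1 hn).mp h2
        exact hvne i h3
    obtain ⟨g, hg0, hg1, hgF⟩ : ∃ g : ℝ, 0 ≤ g ∧ g < 1 ∧ ∀ i, F i ≤ g := by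
      rcases Nat.eq_zero_or_pos k with rfl | hk
      · exact ⟨0, le_refl _, one_pos, fun i => i.elim0⟩
      · have : Nonempty (Fin k) := Fin.pos_iff_nonempty.mp hk
        refine ⟨max 0 (Finset.univ.sup' Finset.univ_nonempty F), le_max_left _ _, ?_, ?_⟩
        · exact max_lt one_pos ((Finset.sup'_lt_iff _).mpr fun i _ => hFlt i)
        · intro i; exact le_max_of_le_right (Finset.le_sup' F (Finset.mem_univ i))
    set γ : ℝ := (g + 1) / 2 with hγ
    have hγpos : 0 < γ := by rw [hγ]; linarith
    have hγlt1 : γ < 1 := by rw [hγ]; linarith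
    set s₀ : ℝ := min δ 1 / 2 with hs₀
    have hs₀pos : 0 < s₀ := by rw [hs₀]; positivity
    have hs₀half : s₀ ≤ 1/2 := by rw [hs₀]; simp; linarith [min_le_right δ 1]
    have hs₀δ : 2 * s₀ ≤ δ := by rw [hs₀]; linarith [min_le_left δ 1]
    set t₀ : ℝ := γ * s₀ with ht₀def
    have ht₀pos : 0 < t₀ := mul_pos hγpos hs₀pos
    have ht₀lt : t₀ < s₀ := by
      rw [ht₀def]; nlinarith
    set eL : EuclideanSpace ℝ (Fin (m+1)) := EuclideanSpace.single (Fin.last m) (1:ℝ) with heL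
    set y : EuclideanSpace ℝ (Fin (m+1)) := s₀ • v + t₀ • eL with hy
    have hyc : ∀ i : Fin m, y i.castSucc = s₀ * v i.castSucc := by
      intro i
      simp [hy, heL, EuclideanSpace.single_apply, (Fin.castSucc_lt_last i).ne]
    have hyl : y (Fin.last m) = t₀ := by
      simp [hy, heL, EuclideanSpace.single_apply, hvlast]
    have hymem : y ∈ ball (0 : EuclideanSpace ℝ (Fin (m+1))) δ := by
      rw [mem_ball, dist_zero_right, hy]
      calc ‖s₀ • v + t₀ • eL‖ ≤ ‖s₀ • v‖ + ‖t₀ • eL‖ := norm_add_le _ _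
        _ = s₀ + t₀ := by
            rw [norm_smul, norm_smul, hv1, heL, EuclideanSpace.norm_single]
            simp [abs_of_pos hs₀pos, abs_of_pos ht₀pos]
        _ < δ := by linarith
    have hyU := hcontra hymem
    rw [mem_iUnion] at hyU
    obtain ⟨i, z, hzK, hz⟩ := hyU
    have hzy : z = y + x i := by
      have : z - x i = y := hz
      linear_combination (norm := module) this
    rw [hzy] at hzK
    rw [memK] at hzK
    -- analyze x i
    set X := x i with hX
    have hXsum : (∑ j : Fin m, X j.castSucc ^ 2) + X (Fin.last m) ^ 2 = 1 := by
      have h1 := norm_eq' X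
      rw [hxS i] at h1
      have := Real.sqrt_eq_one.mp h1.symm
      linarith [this]
    have hXK : Real.sqrt (∑ j : Fin m, X j.castSucc ^ 2) + |X (Fin.last m)| ≤ 1 := hxK i
    have hvsum : ∑ j : Fin m, v j.castSucc ^ 2 = 1 := by
      have h1 := norm_eq' v
      rw [hv1, hvlast] at h1
      have := Real.sqrt_eq_one.mp h1.symm
      linarith [this]
    have hcases : Real.sqrt (∑ j : Fin m, X j.castSucc ^ 2) = 0 ∨ |X (Fin.last m)| = 0 := by
      have ha := Real.sqrt_nonneg (∑ j : Fin m, X j.castSucc ^ 2)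
      have hb := abs_nonneg (X (Fin.last m))
      have hsq := sq_sqrt' X
      have hab : Real.sqrt (∑ j : Fin m, X j.castSucc ^ 2) * |X (Fin.last m)| = 0 := by
        nlinarith [sq_abs (X (Fin.last m))]
      rcases mul_eq_zero.mp hab with h | h
      · exact Or.inl h
      · exact Or.inr h
    rcases hcases with hcaseA | hcaseB
    · -- apex
      have hXsum0 : ∑ j : Fin m, X j.castSucc ^ 2 = 0 :=
        (Real.sqrt_eq_zero (sum_nonneg' X)).mp hcaseA
      have hXc : ∀ j : Fin m, X j.castSucc = 0 := by
        intro j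
        have := (Finset.sum_eq_zero_iff_of_nonneg (fun p _ => sq_nonneg (X p.castSucc))).mp
          hXsum0 j (Finset.mem_univ j)
        exact pow_eq_zero_iff (by norm_num) |>.mp this
      have hXl : X (Fin.last m) = 1 ∨ X (Fin.last m) = -1 := by
        have h2 : X (Fin.last m) ^ 2 = 1 := by rw [hXsum0] at hXsum; linarith
        have : (X (Fin.last m) - 1) * (X (Fin.last m) + 1) = 0 := by nlinarith
        rcases mul_eq_zero.mp this with h | h
        · left; linarith
        · right; linarith
      have hsum1 : ∑ j : Fin m, (y + X) j.castSucc ^ 2 = s₀ ^ 2 := by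
        have : ∀ j : Fin m, (y + X) j.castSucc ^ 2 = s₀^2 * v j.castSucc ^ 2 := by
          intro j
          have : (y + X) j.castSucc = s₀ * v j.castSucc := by simp [hyc j, hXc j]
          rw [this]; ring
        rw [Finset.sum_congr rfl fun j _ => this j, ← Finset.mul_sum, hvsum, mul_one]
      have hsqrt1 : Real.sqrt (∑ j : Fin m, (y + X) j.castSucc ^ 2) = s₀ := by
        rw [hsum1, Real.sqrt_sq hs₀pos.le]
      have hlast1 : (y + X) (Fin.last m) = t₀ + X (Fin.last m) := by simp [hyl]
      rw [hsqrt1, hlast1] at hzK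
      rcases hXl with h | h
      · rw [h, abs_of_pos (by linarith)] at hzK
        linarith
      · rw [h] at hzK
        rw [abs_of_nonpos (by linarith : t₀ + (-1:ℝ) ≤ 0)] at hzK
        linarith
    · -- equator
      have hXl0 : X (Fin.last m) = 0 := abs_eq_zero.mp hcaseB
      have hXsum1 : ∑ j : Fin m, X j.castSucc ^ 2 = 1 := by
        rw [hXl0] at hXsum; simpa using hXsum
      have hP : ⟪v, X⟫ = ∑ j : Fin m, v j.castSucc * X j.castSucc := by
        rw [PiLp.inner_apply]
        simp only [RCLike.inner_apply, starRingEnd_apply, star_trivial]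
        rw [Fin.sum_univ_castSucc, hvlast]
        simp
        exact Finset.sum_congr rfl fun j _ => mul_comm _ _
      set P : ℝ := ⟪v, X⟫ with hPdef
      have hPg : -P ≤ g := hgF i
      have hsum2 : ∑ j : Fin m, (y + X) j.castSucc ^ 2 = s₀^2 + 2*s₀*P + 1 := by
        have expand : ∀ j : Fin m, (y + X) j.castSucc ^ 2 =
            s₀^2 * v j.castSucc^2 + 2*s₀*(v j.castSucc * X j.castSucc) + X j.castSucc^2 := by
          intro j
          have : (y + X) j.castSucc = s₀ * v j.castSucc + X j.castSucc := by simp [hyc j]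
          rw [this]; ring
        rw [Finset.sum_congr rfl fun j _ => expand j, Finset.sum_add_distrib,
          Finset.sum_add_distrib, ← Finset.mul_sum, ← Finset.mul_sum, hvsum, hXsum1, ← hP]
        ring
      have hlast2 : (y + X) (Fin.last m) = t₀ := by simp [hyl, hXl0]
      rw [hsum2, hlast2, abs_of_pos ht₀pos] at hzK
      have h1t : Real.sqrt (s₀^2 + 2*s₀*P + 1) ≤ 1 - t₀ := by linarith
      have hA : s₀^2 + 2*s₀*P + 1 ≤ (1 - t₀)^2 :=
        (Real.sqrt_le_left (by linarith : (0:ℝ) ≤ 1 - t₀)).mp h1t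
      nlinarith [mul_le_mul_of_nonneg_left hPg hs₀pos.le, mul_pos hs₀pos hs₀pos,
        mul_pos hs₀pos (sub_pos.mpr hg1), sq_nonneg (s₀ * (1 - g))]
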